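/- arXiv:1903.10655 — 5 statements merged into one kernel-verified Lean document; each statement's English description precedes it below -/
import Mathlib

section
/- Let Λ, Λ' be lattices in ℝⁿ with bases {ω₁,…,ωₙ} and {ζ₁,…,ζₙ} respectively, g : ℝⁿ → ℝⁿ a K-Lipschitz map with g(0) = 0 and g(x + Σ mᵢωᵢ) = g(x) + Σ mᵢζᵢ for all x ∈ ℝⁿ and integers mᵢ, and w : ℝⁿ → ℝⁿ the linear map sending ωᵢ to ζᵢ. Then the functions g_k(x) := g(kx)/k converge uniformly on ℝⁿ to w as k → ∞. -/
open Filter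

/-- Let `Λ, Λ'` be lattices in `ℝⁿ` with bases `ω = B` and `ζ = B'`, let `g` be a
`K`-Lipschitz map with `g 0 = 0` satisfying the lattice equivariance
`g (x + Σ mᵢ ωᵢ) = g x + Σ mᵢ ζᵢ`, and let `w` be the linear map with `w ωᵢ = ζᵢ`.
Then the maps `g_k (x) = g (k x) / k` converge uniformly on `ℝⁿ` to `w`. -/
theorem tendstoUniformly_rescale_to_affine (n : ℕ) (K : NNReal)
    (B B' : Module.Basis (Fin n) ℝ (EuclideanSpace ℝ (Fin n)))
    (g : EuclideanSpace ℝ (Fin n) → EuclideanSpace ℝ (Fin n))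
    (hg : LipschitzWith K g) (hg0 : g 0 = 0)
    (hequiv : ∀ (x : EuclideanSpace ℝ (Fin n)) (m : Fin n → ℤ),
      g (x + ∑ i, (m i : ℝ) • B i) = g x + ∑ i, (m i : ℝ) • B' i)
    (w : EuclideanSpace ℝ (Fin n) →ₗ[ℝ] EuclideanSpace ℝ (Fin n))
    (hw : ∀ i, w (B i) = B' i) :
    TendstoUniformly (fun (k : ℕ) (x : EuclideanSpace ℝ (Fin n)) => ((k : ℝ))⁻¹ • g ((k : ℝ) • x))
      (fun x => w x) Filter.atTop := by
  set W := LinearMap.toContinuousLinearMap w with hWdef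
  set R : ℝ := ∑ i, ‖B i‖ with hRdef
  have hR : 0 ≤ R := Finset.sum_nonneg fun i _ => norm_nonneg _
  set C : ℝ := ((K : ℝ) + ‖W‖) * R with hCdef
  have hC : 0 ≤ C := mul_nonneg (add_nonneg K.2 (norm_nonneg _)) hR
  have hbound : ∀ x, ‖g x - w x‖ ≤ C := by
    intro x
    set c := B.repr x with hc
    set m : Fin n → ℤ := fun i => -⌊c i⌋ with hm
    set y := x + ∑ i, (m i : ℝ) • B i with hy
    have hyrep : y = ∑ i, Int.fract (c i) • B i := by
      rw [hy]
      nth_rewrite 1 [← B.sum_repr x]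
      rw [← Finset.sum_add_distrib]
      refine Finset.sum_congr rfl fun i _ => ?_
      rw [← add_smul]
      congr 1
      simp [hm, hc, Int.fract, sub_eq_add_neg]
    have hynorm : ‖y‖ ≤ R := by
      calc ‖y‖ ≤ ∑ i, ‖Int.fract (c i) • B i‖ := hyrep ▸ norm_sum_le _ _
        _ ≤ R := by
          refine Finset.sum_le_sum fun i _ => ?_
          rw [norm_smul, Real.norm_eq_abs,
            abs_of_nonneg (Int.fract_nonneg _)]
          nth_rewrite 2 [← one_mul ‖B i‖]
          exact mul_le_mul_of_nonneg_right (le_of_lt (Int.fract_lt_one _)) (norm_nonneg _)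
    have hgy : g y = g x + ∑ i, (m i : ℝ) • B' i := hequiv x m
    have hwy : w y = w x + ∑ i, (m i : ℝ) • B' i := by
      rw [hy, map_add, map_sum]
      congr 1
      refine Finset.sum_congr rfl fun i _ => ?_
      rw [map_smul, hw]
    have hdiff : g x - w x = g y - w y := by rw [hgy, hwy]; abel
    have hgyn : ‖g y‖ ≤ (K : ℝ) * ‖y‖ := by
      have := hg.dist_le_mul y 0
      rw [hg0, dist_zero_right, dist_zero_right] at this
      exact this
    have hwyn : ‖w y‖ ≤ ‖W‖ * ‖y‖ := W.le_opNorm y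
    calc ‖g x - w x‖ = ‖g y - w y‖ := by rw [hdiff]
      _ ≤ ‖g y‖ + ‖w y‖ := norm_sub_le _ _
      _ ≤ (K : ℝ) * ‖y‖ + ‖W‖ * ‖y‖ := add_le_add hgyn hwyn
      _ = ((K : ℝ) + ‖W‖) * ‖y‖ := (add_mul _ _ _).symm
      _ ≤ C := mul_le_mul_of_nonneg_left hynorm (add_nonneg K.2 (norm_nonneg _))
  rw [Metric.tendstoUniformly_iff]
  intro ε hε
  have h0 : Tendsto (fun k : ℕ => C * (k : ℝ)⁻¹) atTop (nhds 0) := by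
    simpa using tendsto_inv_atTop_nhds_zero_nat.const_mul C
  have h1 : ∀ᶠ k : ℕ in atTop, C * (k : ℝ)⁻¹ < ε := h0.eventually (gt_mem_nhds hε)
  filter_upwards [h1, eventually_ge_atTop 1] with k hk hk1 x
  have hkpos : (0 : ℝ) < k := by exact_mod_cast hk1
  rw [dist_eq_norm]
  have hwx : w x = (k : ℝ)⁻¹ • w ((k : ℝ) • x) := by
    rw [map_smul, smul_smul, inv_mul_cancel₀ hkpos.ne', one_smul]
  rw [hwx, ← smul_sub, norm_smul, Real.norm_eq_abs, abs_of_nonneg (inv_nonneg.mpr hkpos.le)]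
  calc (k : ℝ)⁻¹ * ‖w ((k : ℝ) • x) - g ((k : ℝ) • x)‖
      ≤ (k : ℝ)⁻¹ * C := by
        rw [norm_sub_rev]
        exact mul_le_mul_of_nonneg_left (hbound _) (inv_nonneg.mpr hkpos.le)
    _ = C * (k : ℝ)⁻¹ := mul_comm _ _
    _ < ε := hk
end

section
/- Let Λ, Λ' be full-rank lattices in ℝⁿ with bases {ω₁,…,ωₙ} and {ζ₁,…,ζₙ}, and let w be the linear map with w(ωᵢ) = ζᵢ. If g : ℝⁿ → ℝⁿ is any K-Lipschitz map satisfying g(0) = 0 and g(x + Σ mᵢωᵢ) = g(x) + Σ mᵢζᵢ for all x ∈ ℝⁿ, mᵢ ∈ ℤ, then the Lipschitz constant of w is at most K. In other words, the linear (affine) map achieves the minimal Lipschitz constant among all maps in this equivariance class. -/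
/-- Let `Λ, Λ'` be full-rank lattices in `ℝⁿ` with bases `ω = B`, `ζ = B'`, and `w` the
linear map with `w ωᵢ = ζᵢ`.  If `g` is any `K`-Lipschitz map with `g 0 = 0` satisfying
the equivariance `g (x + Σ mᵢ ωᵢ) = g x + Σ mᵢ ζᵢ`, then the Lipschitz constant of `w`
is at most `K`: the affine map achieves the minimal Lipschitz constant in the class. -/
theorem affine_map_is_lipschitz_extremal (n : ℕ) (K : NNReal)
    (B B' : Module.Basis (Fin n) ℝ (EuclideanSpace ℝ (Fin n)))
    (w : EuclideanSpace ℝ (Fin n) →ₗ[ℝ] EuclideanSpace ℝ (Fin n))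
    (hw : ∀ i, w (B i) = B' i)
    (g : EuclideanSpace ℝ (Fin n) → EuclideanSpace ℝ (Fin n))
    (hg : LipschitzWith K g) (hg0 : g 0 = 0)
    (hequiv : ∀ (x : EuclideanSpace ℝ (Fin n)) (m : Fin n → ℤ),
      g (x + ∑ i, (m i : ℝ) • B i) = g x + ∑ i, (m i : ℝ) • B' i) :
    LipschitzWith K (fun x => w x) := by
  set W : EuclideanSpace ℝ (Fin n) →L[ℝ] EuclideanSpace ℝ (Fin n) := LinearMap.toContinuousLinearMap w with hWdef
  set C : ℝ := ∑ i, ‖B i‖ with hCdef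
  have hC0 : 0 ≤ C := Finset.sum_nonneg fun i _ => norm_nonneg _
  -- uniform affine bound on ‖w v‖
  have hbound : ∀ v : EuclideanSpace ℝ (Fin n), ‖w v‖ ≤ K * ‖v‖ + (K * C + ‖W‖ * C) := by
    intro v
    set m : Fin n → ℤ := fun i => ⌊B.repr v i⌋ with hmdef
    set lam : EuclideanSpace ℝ (Fin n) := ∑ i, (m i : ℝ) • B i with hlamdef
    set r : EuclideanSpace ℝ (Fin n) := v - lam with hrdef
    have hr : r = ∑ i, Int.fract (B.repr v i) • B i := by
      rw [hrdef, hlamdef]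
      conv_lhs => rw [← B.sum_repr v]
      rw [← Finset.sum_sub_distrib]
      refine Finset.sum_congr rfl fun i _ => ?_
      rw [← sub_smul, Int.fract]
    have hrnorm : ‖r‖ ≤ C := by
      rw [hr]
      refine le_trans (norm_sum_le _ _) ?_
      refine Finset.sum_le_sum fun i _ => ?_
      rw [norm_smul, Real.norm_eq_abs, abs_of_nonneg (Int.fract_nonneg _)]
      exact mul_le_of_le_one_left (norm_nonneg _) (Int.fract_lt_one _).le
    have hglam : g lam = w lam := by
      have := hequiv 0 m
      rw [zero_add, hg0, zero_add] at this
      rw [hlamdef, this, map_sum]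
      refine Finset.sum_congr rfl fun i _ => ?_
      rw [map_smul, hw]
    have hlamnorm : ‖lam‖ ≤ ‖v‖ + C := by
      have : lam = v - r := by rw [hrdef]; abel
      calc ‖lam‖ = ‖v - r‖ := by rw [this]
        _ ≤ ‖v‖ + ‖r‖ := norm_sub_le _ _
        _ ≤ ‖v‖ + C := by linarith
    have hglamnorm : ‖g lam‖ ≤ K * (‖v‖ + C) := by
      have := hg.dist_le_mul lam 0
      rw [hg0, dist_zero_right, dist_zero_right] at this
      calc ‖g lam‖ ≤ K * ‖lam‖ := this
        _ ≤ K * (‖v‖ + C) := by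
            exact mul_le_mul_of_nonneg_left hlamnorm K.2
    have hwr : ‖w r‖ ≤ ‖W‖ * C := by
      calc ‖w r‖ = ‖W r‖ := rfl
        _ ≤ ‖W‖ * ‖r‖ := W.le_opNorm r
        _ ≤ ‖W‖ * C := mul_le_mul_of_nonneg_left hrnorm (norm_nonneg _)
    have hv : v = lam + r := by rw [hrdef]; abel
    calc ‖w v‖ = ‖w lam + w r‖ := by rw [hv, map_add]
      _ ≤ ‖w lam‖ + ‖w r‖ := norm_add_le _ _
      _ = ‖g lam‖ + ‖w r‖ := by rw [hglam]
      _ ≤ K * (‖v‖ + C) + ‖W‖ * C := add_le_add hglamnorm hwr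
      _ = K * ‖v‖ + (K * C + ‖W‖ * C) := by ring
  set D : ℝ := K * C + ‖W‖ * C with hDdef
  have hD0 : 0 ≤ D := add_nonneg (mul_nonneg K.2 hC0) (mul_nonneg (norm_nonneg _) hC0)
  have key : ∀ x : EuclideanSpace ℝ (Fin n), ‖w x‖ ≤ K * ‖x‖ := by
    intro x
    refine le_of_forall_pos_le_add fun ε hε => ?_
    obtain ⟨N, hN⟩ := exists_nat_gt (D / ε)
    have hN0 : 0 < (N : ℝ) := lt_of_le_of_lt (div_nonneg hD0 hε.le) hN
    have h1 := hbound ((N : ℝ) • x)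
    rw [map_smul, norm_smul, norm_smul, Real.norm_natCast] at h1
    have hDN : D < (N : ℝ) * ε := by
      rw [div_lt_iff₀ hε] at hN; linarith
    have h2 : (N : ℝ) * ‖w x‖ ≤ (N : ℝ) * (K * ‖x‖ + ε) := by
      calc (N : ℝ) * ‖w x‖ ≤ K * ((N : ℝ) * ‖x‖) + D := h1
        _ ≤ K * ((N : ℝ) * ‖x‖) + (N : ℝ) * ε := by linarith
        _ = (N : ℝ) * (K * ‖x‖ + ε) := by ring
    exact le_of_mul_le_mul_left h2 hN0
  refine LipschitzWith.of_dist_le_mul fun x y => ?_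
  have : w x - w y = w (x - y) := (map_sub w x y).symm
  rw [dist_eq_norm, dist_eq_norm, this]
  exact key (x - y)
end

section
/- For positive-definite symmetric real n×n matrices X, Y of determinant 1, define d_Th(Y, X) = (1/2)·max{log|λ| : λ an eigenvalue of XY⁻¹}. Then d_Th satisfies the triangle inequality: d_Th(X, Z) ≤ d_Th(X, Y) + d_Th(Y, Z) for all such X, Y, Z. -/
open Matrix

/-- The Thurston distance between positive-definite symmetric unimodular matrices:
`d_Th(Y, X) = (1/2) max { log |λ| : λ eigenvalue of X Y⁻¹ }`. -/
noncomputable def dTh {n : ℕ} (Y X : Matrix (Fin n) (Fin n) ℝ) : ℝ :=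
  (1 / 2) * sSup {r : ℝ | ∃ lam ∈ spectrum ℝ (X * Y⁻¹), r = Real.log |lam|}

open scoped MatrixOrder in
noncomputable def Matrix.PosSemidef.sqrt {m : Type*} [Fintype m] [DecidableEq m]
    {A : Matrix m m ℝ} (_ : A.PosSemidef) : Matrix m m ℝ := CFC.sqrt A

open scoped MatrixOrder in
lemma Matrix.PosSemidef.posSemidef_sqrt {m : Type*} [Fintype m] [DecidableEq m]
    {A : Matrix m m ℝ} (hA : A.PosSemidef) : hA.sqrt.PosSemidef :=
  (CFC.sqrt_nonneg A).posSemidef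

open scoped MatrixOrder in
lemma Matrix.PosSemidef.sqrt_mul_self {m : Type*} [Fintype m] [DecidableEq m]
    {A : Matrix m m ℝ} (hA : A.PosSemidef) : hA.sqrt * hA.sqrt = A :=
  CFC.sqrt_mul_sqrt_self A hA.nonneg

namespace DThAux

variable {m : Type*} [Fintype m] [DecidableEq m]

lemma posDef_sqrt {P : Matrix m m ℝ} (hP : P.PosDef) : hP.posSemidef.sqrt.PosDef := by
  have hT : hP.posSemidef.sqrt.PosSemidef := hP.posSemidef.posSemidef_sqrt
  have hTT : hP.posSemidef.sqrt * hP.posSemidef.sqrt = P := hP.posSemidef.sqrt_mul_self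
  refine PosDef.of_dotProduct_mulVec_pos hT.1 fun ⦃x⦄ hx => lt_of_le_of_ne (hT.dotProduct_mulVec_nonneg x) fun h0 => ?_
  have hTx : hP.posSemidef.sqrt *ᵥ x = 0 := (hT.dotProduct_mulVec_zero_iff x).mp h0.symm
  have hPx : P *ᵥ x = 0 := by rw [← hTT, ← mulVec_mulVec, hTx, mulVec_zero]
  have h2 := hP.dotProduct_mulVec_pos hx
  rw [hPx, dotProduct_zero] at h2
  exact lt_irrefl 0 h2

lemma sym_dot {S : Matrix m m ℝ} (hS : S.IsHermitian) (x y : m → ℝ) :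
    (S *ᵥ x) ⬝ᵥ y = x ⬝ᵥ (S *ᵥ y) := by
  have hst : Sᵀ = S := by
    have := hS.eq
    rwa [conjTranspose_eq_transpose_of_trivial] at this
  conv_lhs => rw [← hst, mulVec_transpose]
  rw [← dotProduct_mulVec]

lemma conj_posDef {S Q : Matrix m m ℝ} (hS : S.PosDef) (hQ : Q.PosDef) :
    (S * Q * S).PosDef := by
  refine PosDef.of_dotProduct_mulVec_pos ?_ fun ⦃x⦄ hx => ?_
  · show (S * Q * S)ᴴ = S * Q * S
    rw [conjTranspose_mul, conjTranspose_mul, hS.1.eq, hQ.1.eq, mul_assoc]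
  · have hSx : S *ᵥ x ≠ 0 := by
      intro h
      exact hx (by
        have hinj := Matrix.mulVec_injective_iff_isUnit.mpr hS.isUnit
        exact hinj (by simpa using h))
    have h2 := hQ.dotProduct_mulVec_pos hSx
    rw [star_trivial] at h2 ⊢
    calc 0 < (S *ᵥ x) ⬝ᵥ Q *ᵥ (S *ᵥ x) := h2
    _ = x ⬝ᵥ (S * Q * S) *ᵥ x := by
        rw [sym_dot hS.1, mulVec_mulVec, mulVec_mulVec]

lemma quad_le {A : Matrix m m ℝ} (hA : A.IsHermitian) {c : ℝ}
    (hc : ∀ i, hA.eigenvalues i ≤ c) (v : m → ℝ) :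
    v ⬝ᵥ A *ᵥ v ≤ c * (v ⬝ᵥ v) := by
  set U : Matrix m m ℝ := (hA.eigenvectorUnitary : Matrix m m ℝ) with hUdef
  have hU : U * star U = 1 := Matrix.mem_unitaryGroup_iff.mp hA.eigenvectorUnitary.2
  have hd : diagonal (fun i => c - hA.eigenvalues i)
      = c • (1 : Matrix m m ℝ) - diagonal (RCLike.ofReal ∘ hA.eigenvalues) := by
    ext i j
    by_cases h : i = j <;> simp [h]
  have key : c • (1 : Matrix m m ℝ) - A
      = U * diagonal (fun i => c - hA.eigenvalues i) * star U := by
    rw [hd, mul_sub, sub_mul]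
    congr 1
    · rw [mul_smul_comm, mul_one, smul_mul_assoc, hU]
    · exact hA.spectral_theorem
  have hpsd : PosSemidef (c • (1 : Matrix m m ℝ) - A) := by
    rw [key, Matrix.star_eq_conjTranspose]
    exact (PosSemidef.diagonal fun i => sub_nonneg.mpr (hc i)).mul_mul_conjTranspose_same U
  have h0 := hpsd.dotProduct_mulVec_nonneg v
  rw [star_trivial, sub_mulVec, dotProduct_sub, smul_mulVec, one_mulVec,
    dotProduct_smul, smul_eq_mul] at h0
  linarith

lemma exists_vec {A : Matrix m m ℝ} (hA : A.IsHermitian) (i : m) :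
    ∃ u : m → ℝ, u ≠ 0 ∧ A *ᵥ u = hA.eigenvalues i • u := by
  refine ⟨⇑(hA.eigenvectorBasis i), ?_, hA.mulVec_eigenvectorBasis i⟩
  intro h
  exact hA.eigenvectorBasis.orthonormal.ne_zero i (by ext1 j; exact congrFun h j)

lemma spectrum_conj {T : Matrix m m ℝ} (Q : Matrix m m ℝ) (hT : T.PosDef) :
    spectrum ℝ (Q * T⁻¹ * T⁻¹) = spectrum ℝ (T⁻¹ * Q * T⁻¹) := by
  have hdet : IsUnit T.det := hT.det_pos.ne'.isUnit
  have h1 : T⁻¹ * T = 1 := nonsing_inv_mul T hdet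
  have := spectrum.units_conjugate' (R := ℝ) (a := Q * T⁻¹ * T⁻¹) (u := hT.isUnit.unit)
  rw [Matrix.coe_units_inv, hT.isUnit.unit_spec] at this
  rw [← this]
  simp only [mul_assoc, h1, mul_one]

variable [Nonempty m]

lemma pair {P Q : Matrix m m ℝ} (hP : P.PosDef) (hQ : Q.PosDef) :
    ∃ c : ℝ, 0 < c ∧ c ∈ spectrum ℝ (Q * P⁻¹) ∧
      ∀ v : m → ℝ, v ⬝ᵥ Q *ᵥ v ≤ c * (v ⬝ᵥ P *ᵥ v) := by
  set T := hP.posSemidef.sqrt with hTdef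
  have hTT : T * T = P := hP.posSemidef.sqrt_mul_self
  have hT : T.PosDef := posDef_sqrt hP
  have hTi : T⁻¹.PosDef := hT.inv
  have hdet : IsUnit T.det := hT.det_pos.ne'.isUnit
  have h1 : T⁻¹ * T = 1 := nonsing_inv_mul T hdet
  have hApd : (T⁻¹ * Q * T⁻¹).PosDef := conj_posDef hTi hQ
  have hspec : spectrum ℝ (Q * P⁻¹) = spectrum ℝ (T⁻¹ * Q * T⁻¹) := by
    rw [← hTT, Matrix.mul_inv_rev, ← mul_assoc]
    exact spectrum_conj Q hT
  obtain ⟨i0, hi0⟩ := Finite.exists_max hApd.1.eigenvalues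
  refine ⟨hApd.1.eigenvalues i0, hApd.eigenvalues_pos i0, ?_, ?_⟩
  · rw [hspec, hApd.isHermitian.spectrum_real_eq_range_eigenvalues]
    exact ⟨i0, rfl⟩
  · intro v
    have hq := quad_le hApd.1 hi0 (T *ᵥ v)
    have h2 : T * T⁻¹ = 1 := mul_nonsing_inv T hdet
    have hid : T * (T⁻¹ * Q * T⁻¹) * T = Q := by
      simp only [mul_assoc, h1, mul_one]
      rw [← mul_assoc, h2, one_mul]
    have hL : (T *ᵥ v) ⬝ᵥ (T⁻¹ * Q * T⁻¹) *ᵥ (T *ᵥ v) = v ⬝ᵥ Q *ᵥ v := by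
      rw [sym_dot hT.1, mulVec_mulVec, mulVec_mulVec, hid]
    have hR : (T *ᵥ v) ⬝ᵥ (T *ᵥ v) = v ⬝ᵥ P *ᵥ v := by
      rw [sym_dot hT.1, mulVec_mulVec, hTT]
    rw [hL, hR] at hq
    exact hq

lemma mem_bound {P Q : Matrix m m ℝ} (hP : P.PosDef) (hQ : Q.PosDef)
    {c : ℝ} (h : ∀ v : m → ℝ, v ⬝ᵥ Q *ᵥ v ≤ c * (v ⬝ᵥ P *ᵥ v)) :
    ∀ lam ∈ spectrum ℝ (Q * P⁻¹), 0 < lam ∧ lam ≤ c := by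
  set T := hP.posSemidef.sqrt with hTdef
  have hTT : T * T = P := hP.posSemidef.sqrt_mul_self
  have hT : T.PosDef := posDef_sqrt hP
  have hTi : T⁻¹.PosDef := hT.inv
  have hdet : IsUnit T.det := hT.det_pos.ne'.isUnit
  have h1 : T⁻¹ * T = 1 := nonsing_inv_mul T hdet
  have h2 : T * T⁻¹ = 1 := mul_nonsing_inv T hdet
  have hApd : (T⁻¹ * Q * T⁻¹).PosDef := conj_posDef hTi hQ
  have hspec : spectrum ℝ (Q * P⁻¹) = spectrum ℝ (T⁻¹ * Q * T⁻¹) := by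
    rw [← hTT, Matrix.mul_inv_rev, ← mul_assoc]
    exact spectrum_conj Q hT
  intro lam hlam
  rw [hspec, hApd.isHermitian.spectrum_real_eq_range_eigenvalues] at hlam
  obtain ⟨i, rfl⟩ := hlam
  refine ⟨hApd.eigenvalues_pos i, ?_⟩
  obtain ⟨u, hu0, huA⟩ := exists_vec hApd.1 i
  set v := T⁻¹ *ᵥ u with hvdef
  have hqQ : v ⬝ᵥ Q *ᵥ v = hApd.1.eigenvalues i * (u ⬝ᵥ u) := by
    rw [hvdef, sym_dot hTi.1, mulVec_mulVec, mulVec_mulVec, huA,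
      dotProduct_smul, smul_eq_mul]
  have hqP : v ⬝ᵥ P *ᵥ v = u ⬝ᵥ u := by
    rw [hvdef, sym_dot hTi.1, mulVec_mulVec, mulVec_mulVec, ← hTT]
    rw [show T⁻¹ * (T * T) * T⁻¹ = 1 by
      rw [← mul_assoc, h1, one_mul, h2], one_mulVec]
  have huu : 0 < u ⬝ᵥ u := by
    have hnn : (0:ℝ) ≤ u ⬝ᵥ u := Finset.sum_nonneg fun i _ => mul_self_nonneg (u i)
    rcases hnn.lt_or_eq with h' | h'
    · exact h'
    · exact absurd (dotProduct_self_eq_zero.mp h'.symm) hu0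
  have := h v
  rw [hqQ, hqP] at this
  exact le_of_mul_le_mul_right this huu

end DThAux

/-- The Thurston metric satisfies the triangle inequality on the space of
positive-definite symmetric real `n × n` matrices of determinant 1. -/
theorem dTh_triangle (n : ℕ) (X Y Z : Matrix (Fin n) (Fin n) ℝ)
    (hX : X.PosDef) (hY : Y.PosDef) (hZ : Z.PosDef)
    (hdX : X.det = 1) (hdY : Y.det = 1) (hdZ : Z.det = 1) :
    dTh X Z ≤ dTh X Y + dTh Y Z := by
  rcases Nat.eq_zero_or_pos n with rfl | hn
  · haveI : Subsingleton (Matrix (Fin 0) (Fin 0) ℝ) := ⟨fun a b => by ext i; exact i.elim0⟩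
    have he : ∀ M : Matrix (Fin 0) (Fin 0) ℝ, spectrum ℝ M = ∅ :=
      fun M => Set.eq_empty_of_forall_notMem fun r hr => hr (isUnit_of_subsingleton _)
    simp [dTh, he, Real.sSup_empty]
  · haveI : Nonempty (Fin n) := Fin.pos_iff_nonempty.mp hn
    obtain ⟨c1, hc1pos, hc1mem, hc1q⟩ := DThAux.pair hX hY
    obtain ⟨c2, hc2pos, hc2mem, hc2q⟩ := DThAux.pair hY hZ
    obtain ⟨c3, hc3pos, hc3mem, _⟩ := DThAux.pair hX hZ
    have hq : ∀ v : Fin n → ℝ, v ⬝ᵥ Z *ᵥ v ≤ (c1 * c2) * (v ⬝ᵥ X *ᵥ v) := fun v => by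
      calc v ⬝ᵥ Z *ᵥ v ≤ c2 * (v ⬝ᵥ Y *ᵥ v) := hc2q v
      _ ≤ c2 * (c1 * (v ⬝ᵥ X *ᵥ v)) := mul_le_mul_of_nonneg_left (hc1q v) hc2pos.le
      _ = (c1 * c2) * (v ⬝ᵥ X *ᵥ v) := by ring
    have hbound := DThAux.mem_bound hX hZ hq
    have hbdd : ∀ M : Matrix (Fin n) (Fin n) ℝ,
        BddAbove {r : ℝ | ∃ lam ∈ spectrum ℝ M, r = Real.log |lam|} := fun M => by
      have h : {r : ℝ | ∃ lam ∈ spectrum ℝ M, r = Real.log |lam|}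
          = (fun lam => Real.log |lam|) '' spectrum ℝ M := by
        ext r
        constructor
        · rintro ⟨l, hl, rfl⟩; exact ⟨l, hl, rfl⟩
        · rintro ⟨l, hl, rfl⟩; exact ⟨l, hl, rfl⟩
      rw [h]
      exact ((Matrix.finite_real_spectrum (A := M)).image _).bddAbove
    have h1 : sSup {r : ℝ | ∃ lam ∈ spectrum ℝ (Z * X⁻¹), r = Real.log |lam|}
        ≤ Real.log c1 + Real.log c2 := by
      have hne : {r : ℝ | ∃ lam ∈ spectrum ℝ (Z * X⁻¹), r = Real.log |lam|}.Nonempty :=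
        ⟨Real.log |c3|, ⟨c3, hc3mem, rfl⟩⟩
      refine csSup_le hne ?_
      rintro r ⟨lam, hlam, rfl⟩
      obtain ⟨hpos, hle⟩ := hbound lam hlam
      rw [abs_of_pos hpos, ← Real.log_mul hc1pos.ne' hc2pos.ne']
      exact Real.log_le_log hpos hle
    have h2 : Real.log c1 ≤ sSup {r : ℝ | ∃ lam ∈ spectrum ℝ (Y * X⁻¹), r = Real.log |lam|} :=
      le_csSup (hbdd _) ⟨c1, hc1mem, by rw [abs_of_pos hc1pos]⟩
    have h3 : Real.log c2 ≤ sSup {r : ℝ | ∃ lam ∈ spectrum ℝ (Z * Y⁻¹), r = Real.log |lam|} :=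
      le_csSup (hbdd _) ⟨c2, hc2mem, by rw [abs_of_pos hc2pos]⟩
    simp only [dTh]
    linarith
end

section
/- Let γ : [0,1] → 𝒫ₙ be a C¹ path in the space of positive-definite symmetric matrices with γ(0) = I, γ(1) = A. Then (1/2)·log λ_max(A) ≤ (1/2)∫₀¹ sup_{v≠0} ⟨γ'(t)v, v⟩/⟨γ(t)v, v⟩ dt. That is, the Thurston distance from I to A is a lower bound for the Finsler length of any path joining them. -/
open Matrix

attribute [local instance] Matrix.frobeniusNormedAddCommGroup Matrix.frobeniusNormedSpace

section ThurstonAux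
open Set MeasureTheory intervalIntegral

variable {n : ℕ}

private lemma posdef_quad {P : Matrix (Fin n) (Fin n) ℝ} (hP : P.PosDef)
    {v : Fin n → ℝ} (hv : v ≠ 0) : 0 < (P *ᵥ v) ⬝ᵥ v := by
  have h := hP.dotProduct_mulVec_pos hv
  rwa [star_trivial, dotProduct_comm] at h

private lemma ne_zero_of_mem_K {v : Fin n → ℝ} (hv : v ⬝ᵥ v = 1) : v ≠ 0 := by
  intro h
  rw [h] at hv
  simp at hv

private lemma set_eq_image (B P : Matrix (Fin n) (Fin n) ℝ) (hP : P.PosDef) :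
    {r : ℝ | ∃ v : Fin n → ℝ, v ≠ 0 ∧ r = (B *ᵥ v) ⬝ᵥ v / ((P *ᵥ v) ⬝ᵥ v)} =
      (fun v : Fin n → ℝ => (B *ᵥ v) ⬝ᵥ v / ((P *ᵥ v) ⬝ᵥ v)) '' {v | v ⬝ᵥ v = 1} := by
  ext r
  constructor
  · rintro ⟨v, hv, rfl⟩
    have hvv : 0 < v ⬝ᵥ v := by
      have h0 : 0 ≤ v ⬝ᵥ v := Finset.sum_nonneg fun i _ => mul_self_nonneg _
      rcases h0.lt_or_eq with h | h
      · exact h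
      · exact absurd ((dotProduct_self_eq_zero).1 h.symm) hv
    set c : ℝ := (Real.sqrt (v ⬝ᵥ v))⁻¹ with hc
    have hs : Real.sqrt (v ⬝ᵥ v) ≠ 0 := by positivity
    have hcne : c ≠ 0 := inv_ne_zero hs
    refine ⟨c • v, ?_, ?_⟩
    · show (c • v) ⬝ᵥ (c • v) = 1
      rw [smul_dotProduct, dotProduct_smul]
      simp only [smul_eq_mul, hc]
      rw [← Real.mul_self_sqrt hvv.le]
      field_simp
      rw [Real.sqrt_sq (Real.sqrt_nonneg _)]
    · show (B *ᵥ (c • v)) ⬝ᵥ (c • v) / ((P *ᵥ (c • v)) ⬝ᵥ (c • v)) = _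
      rw [mulVec_smul, mulVec_smul, smul_dotProduct, dotProduct_smul,
        smul_dotProduct, dotProduct_smul]
      simp only [smul_eq_mul]
      rw [mul_div_mul_left _ _ hcne, mul_div_mul_left _ _ hcne]
  · rintro ⟨v, hv, rfl⟩
    exact ⟨v, ne_zero_of_mem_K hv, rfl⟩

private lemma isCompact_K : IsCompact {v : Fin n → ℝ | v ⬝ᵥ v = 1} := by
  have hdc : Continuous fun v : Fin n → ℝ => v ⬝ᵥ v :=
    continuous_id.dotProduct continuous_id
  rw [Metric.isCompact_iff_isClosed_bounded]
  constructor
  · exact isClosed_eq hdc continuous_const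
  · apply Metric.isBounded_iff_subset_closedBall (0 : Fin n → ℝ) |>.2
    refine ⟨1, fun v hv => ?_⟩
    simp only [Metric.mem_closedBall, dist_zero_right]
    rw [pi_norm_le_iff_of_nonneg zero_le_one]
    intro i
    have h1 : v i * v i ≤ v ⬝ᵥ v := by
      refine Finset.single_le_sum (f := fun j => v j * v j)
        (fun j _ => mul_self_nonneg _) (Finset.mem_univ i)
    rw [hv] at h1
    have : ‖v i‖ = |v i| := rfl
    rw [this, abs_le_one_iff_mul_self_le_one]
    exact h1

private lemma continuousOn_sSup_image {X V : Type*} [MetricSpace X] [MetricSpace V]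
    {s : Set X} {K : Set V} (hs : IsCompact s) (hK : IsCompact K) (hKne : K.Nonempty)
    {g : X × V → ℝ} (hg : ContinuousOn g (s ×ˢ K)) :
    ContinuousOn (fun x => sSup ((fun v => g (x, v)) '' K)) s := by
  have himg : ∀ x ∈ s, IsCompact ((fun v => g (x, v)) '' K) := by
    intro x hx
    exact hK.image_of_continuousOn <|
      hg.comp (Continuous.prodMk_right x).continuousOn fun v hv => ⟨hx, hv⟩
  have hne : ∀ x, ((fun v => g (x, v)) '' K).Nonempty := fun x => hKne.image _
  have hu : UniformContinuousOn g (s ×ˢ K) :=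
    (hs.prod hK).uniformContinuousOn_of_continuous hg
  rw [Metric.continuousOn_iff]
  intro x hx ε hε
  obtain ⟨δ, hδ, hδ'⟩ := Metric.uniformContinuousOn_iff.1 hu (ε / 2) (by linarith)
  refine ⟨δ, hδ, fun y hy hyx => ?_⟩
  have key : ∀ v ∈ K, dist (g (y, v)) (g (x, v)) < ε / 2 := by
    intro v hv
    refine hδ' (y, v) ⟨hy, hv⟩ (x, v) ⟨hx, hv⟩ ?_
    rw [Prod.dist_eq]
    simp only [dist_self]
    exact max_lt_iff.2 ⟨hyx, hδ⟩
  have hb1 : sSup ((fun v => g (y, v)) '' K) ≤ sSup ((fun v => g (x, v)) '' K) + ε / 2 := by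
    refine csSup_le (hne y) ?_
    rintro _ ⟨v, hv, rfl⟩
    have h1 : g (x, v) ≤ sSup ((fun v => g (x, v)) '' K) :=
      le_csSup (himg x hx).bddAbove ⟨v, hv, rfl⟩
    have h2 := key v hv
    rw [Real.dist_eq] at h2
    have := abs_lt.1 h2
    linarith [this.2]
  have hb2 : sSup ((fun v => g (x, v)) '' K) ≤ sSup ((fun v => g (y, v)) '' K) + ε / 2 := by
    refine csSup_le (hne x) ?_
    rintro _ ⟨v, hv, rfl⟩
    have h1 : g (y, v) ≤ sSup ((fun v => g (y, v)) '' K) :=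
      le_csSup (himg y hy).bddAbove ⟨v, hv, rfl⟩
    have h2 := key v hv
    rw [Real.dist_eq] at h2
    have := abs_lt.1 h2
    linarith [this.1]
  rw [Real.dist_eq, abs_lt]
  constructor <;> linarith

end ThurstonAux

set_option maxHeartbeats 2000000 in
/-- For a `C¹` path `γ` in the space of positive-definite symmetric matrices with
`γ 0 = I`, `γ 1 = A`, the Thurston distance `(1/2) log λ_max(A)` is at most the Finsler
length `(1/2) ∫₀¹ sup_{v ≠ 0} ⟨γ'(t) v, v⟩ / ⟨γ(t) v, v⟩ dt`. -/
theorem thurston_dist_le_finsler_length (n : ℕ) (A : Matrix (Fin n) (Fin n) ℝ)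
    (γ : ℝ → Matrix (Fin n) (Fin n) ℝ)
    (hγ : ContDiffOn ℝ 1 γ (Set.Icc 0 1))
    (hpos : ∀ t ∈ Set.Icc (0:ℝ) 1, (γ t).PosDef) (hsymm : ∀ t ∈ Set.Icc (0:ℝ) 1, (γ t).IsSymm)
    (h0 : γ 0 = 1) (h1 : γ 1 = A) :
    (1 / 2) * Real.log (sSup (spectrum ℝ A)) ≤
      (1 / 2) * ∫ t in (0:ℝ)..1, sSup {r : ℝ | ∃ v : Fin n → ℝ, v ≠ 0 ∧
        r = ((deriv γ t).mulVec v ⬝ᵥ v) / ((γ t).mulVec v ⬝ᵥ v)} := by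
  classical
  rcases Nat.eq_zero_or_pos n with hn | hn
  · subst hn
    have hset : ∀ t : ℝ, {r : ℝ | ∃ v : Fin 0 → ℝ, v ≠ 0 ∧
        r = ((deriv γ t).mulVec v ⬝ᵥ v) / ((γ t).mulVec v ⬝ᵥ v)} = (∅ : Set ℝ) := by
      intro t
      refine Set.eq_empty_iff_forall_notMem.2 ?_
      rintro r ⟨v, hv, -⟩
      exact hv (Subsingleton.elim v 0)
    have hspec : spectrum ℝ A = ∅ :=
      Set.eq_empty_iff_forall_notMem.2 fun x hx =>
        (spectrum.mem_iff.1 hx) (isUnit_of_subsingleton _)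
    simp only [hset, hspec, Real.sSup_empty, Real.log_zero, mul_zero,
      intervalIntegral.integral_const, smul_zero]
    norm_num
  haveI : Nonempty (Fin n) := Fin.pos_iff_nonempty.1 hn
  have h01 : (0:ℝ) ≤ 1 := zero_le_one
  have hA_pos : A.PosDef := h1 ▸ hpos 1 (by norm_num)
  have hA : A.IsHermitian := hA_pos.1
  obtain ⟨i, hi⟩ := Finite.exists_max hA.eigenvalues
  have hspec : spectrum ℝ A = Set.range hA.eigenvalues := hA.spectrum_real_eq_range_eigenvalues
  have hlam : sSup (spectrum ℝ A) = hA.eigenvalues i := by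
    rw [hspec]
    apply le_antisymm
    · refine csSup_le (Set.range_nonempty _) ?_
      rintro _ ⟨j, rfl⟩
      exact hi j
    · exact le_csSup (Set.finite_range _).bddAbove ⟨i, rfl⟩
  set v₀ : Fin n → ℝ := ⇑(hA.eigenvectorBasis i) with hv₀def
  have hv₀1 : v₀ ⬝ᵥ v₀ = 1 := by
    have h := hA.eigenvectorBasis.orthonormal.1 i
    have h2 : (inner ℝ (hA.eigenvectorBasis i) (hA.eigenvectorBasis i) : ℝ) = 1 := by
      rw [real_inner_self_eq_norm_sq, h]; norm_num
    rw [PiLp.inner_apply] at h2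
    simpa [dotProduct, hv₀def, pow_two] using h2
  have hv₀ne : v₀ ≠ 0 := ne_zero_of_mem_K hv₀1
  have heig : A *ᵥ v₀ = hA.eigenvalues i • v₀ := hA.mulVec_eigenvectorBasis i
  -- the continuous linear functional M ↦ (M v₀) ⬝ v₀
  set l : Matrix (Fin n) (Fin n) ℝ →ₗ[ℝ] ℝ :=
    { toFun := fun M => (M *ᵥ v₀) ⬝ᵥ v₀
      map_add' := fun M N => by simp [Matrix.add_mulVec, add_dotProduct]
      map_smul' := fun c M => by
        simp [Matrix.smul_mulVec, smul_dotProduct] } with hldef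
  set L : Matrix (Fin n) (Fin n) ℝ →L[ℝ] ℝ := LinearMap.toContinuousLinearMap l with hLdef
  have hLapp : ∀ M, L M = (M *ᵥ v₀) ⬝ᵥ v₀ := fun M => rfl
  set B : ℝ → Matrix (Fin n) (Fin n) ℝ := fun t => derivWithin γ (Set.Icc 0 1) t with hBdef
  have hBcont : ContinuousOn B (Set.Icc 0 1) :=
    hγ.continuousOn_derivWithin (uniqueDiffOn_Icc one_pos) le_rfl
  have hderiv_eq : ∀ t ∈ Set.Ioo (0:ℝ) 1, deriv γ t = B t := fun t ht =>
    (derivWithin_of_mem_nhds (Icc_mem_nhds ht.1 ht.2)).symm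
  have hderiv : ∀ t ∈ Set.Ioo (0:ℝ) 1, HasDerivAt γ (B t) t := by
    intro t ht
    have hmem : Set.Icc (0:ℝ) 1 ∈ nhds t := Icc_mem_nhds ht.1 ht.2
    have hdh : DifferentiableAt ℝ γ t :=
      ((hγ.differentiableOn one_ne_zero) t (Set.Ioo_subset_Icc_self ht)).differentiableAt hmem
    rw [← hderiv_eq t ht]
    exact hdh.hasDerivAt
  set q : ℝ → ℝ := fun t => ((γ t) *ᵥ v₀) ⬝ᵥ v₀ with hqdef
  have hqpos : ∀ t ∈ Set.Icc (0:ℝ) 1, 0 < q t := fun t ht => posdef_quad (hpos t ht) hv₀ne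
  have hq : ∀ t ∈ Set.Ioo (0:ℝ) 1, HasDerivAt q ((B t *ᵥ v₀) ⬝ᵥ v₀) t := by
    intro t ht
    have := (L.hasFDerivAt.comp_hasDerivAt t (hderiv t ht))
    exact this
  set G : ℝ → ℝ := fun t => (B t *ᵥ v₀) ⬝ᵥ v₀ / q t with hGdef
  set f : ℝ → ℝ := fun t => Real.log (q t) with hfdef
  have hf : ∀ t ∈ Set.Ioo (0:ℝ) 1, HasDerivAt f (G t) t := fun t ht =>
    (hq t ht).log (hqpos t (Set.Ioo_subset_Icc_self ht)).ne'
  have hqcont : ContinuousOn q (Set.Icc 0 1) :=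
    L.continuous.comp_continuousOn hγ.continuousOn
  have hfcont : ContinuousOn f (Set.Icc 0 1) :=
    hqcont.log fun t ht => (hqpos t ht).ne'
  have hGcont : ContinuousOn G (Set.Icc 0 1) :=
    (L.continuous.comp_continuousOn hBcont).div hqcont fun t ht => (hqpos t ht).ne'
  have hGint : IntervalIntegrable G MeasureTheory.volume 0 1 :=
    ContinuousOn.intervalIntegrable (by rw [Set.uIcc_of_le h01]; exact hGcont)
  have hFTC : ∫ t in (0:ℝ)..1, G t = f 1 - f 0 :=
    intervalIntegral.integral_eq_sub_of_hasDeriv_right_of_le h01 hfcont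
      (fun t ht => (hf t ht).hasDerivWithinAt) hGint
  have hf1 : f 1 = Real.log (hA.eigenvalues i) := by
    show Real.log (((γ 1) *ᵥ v₀) ⬝ᵥ v₀) = _
    rw [h1, heig, smul_dotProduct, hv₀1]
    simp
  have hf0 : f 0 = 0 := by
    show Real.log (((γ 0) *ᵥ v₀) ⬝ᵥ v₀) = 0
    rw [h0, Matrix.one_mulVec, hv₀1, Real.log_one]
  -- the sup function
  set K : Set (Fin n → ℝ) := {v | v ⬝ᵥ v = 1} with hKdef
  have hv₀K : v₀ ∈ K := hv₀1
  have hKne : K.Nonempty := ⟨v₀, hv₀K⟩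
  set g : ℝ × (Fin n → ℝ) → ℝ :=
    fun p => (B p.1 *ᵥ p.2) ⬝ᵥ p.2 / ((γ p.1 *ᵥ p.2) ⬝ᵥ p.2) with hgdef
  have hentry : ∀ (F : ℝ → Matrix (Fin n) (Fin n) ℝ), ContinuousOn F (Set.Icc 0 1) →
      ∀ i j : Fin n, ContinuousOn (fun t => F t i j) (Set.Icc (0:ℝ) 1) := by
    intro F hF i j
    exact (LinearMap.toContinuousLinearMap
      ({ toFun := fun M : Matrix (Fin n) (Fin n) ℝ => M i j,
         map_add' := fun M N => rfl,
         map_smul' := fun c M => rfl } :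
        Matrix (Fin n) (Fin n) ℝ →ₗ[ℝ] ℝ)).continuous.comp_continuousOn hF
  have hquad : ∀ (F : ℝ → Matrix (Fin n) (Fin n) ℝ), ContinuousOn F (Set.Icc 0 1) →
      ContinuousOn (fun p : ℝ × (Fin n → ℝ) => (F p.1 *ᵥ p.2) ⬝ᵥ p.2)
        (Set.Icc (0:ℝ) 1 ×ˢ K) := by
    intro F hF
    have hrw : (fun p : ℝ × (Fin n → ℝ) => (F p.1 *ᵥ p.2) ⬝ᵥ p.2)
        = fun p => ∑ i, (∑ j, F p.1 i j * p.2 j) * p.2 i := rfl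
    rw [hrw]
    apply continuousOn_finset_sum
    intro i _
    apply ContinuousOn.mul
    · apply continuousOn_finset_sum
      intro j _
      exact (((hentry F hF i j).comp continuous_fst.continuousOn fun p hp => hp.1).mul
        ((continuous_apply j).comp continuous_snd).continuousOn)
    · exact ((continuous_apply i).comp continuous_snd).continuousOn
  have hgcont : ContinuousOn g (Set.Icc (0:ℝ) 1 ×ˢ K) := by
    apply ContinuousOn.div (hquad B hBcont) (hquad γ hγ.continuousOn)
    rintro ⟨t, v⟩ ⟨ht, hv⟩
    exact (posdef_quad (hpos t ht) (ne_zero_of_mem_K hv)).ne'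
  set H : ℝ → ℝ := fun t => sSup ((fun v => g (t, v)) '' K) with hHdef
  have hHcont : ContinuousOn H (Set.Icc 0 1) :=
    continuousOn_sSup_image isCompact_Icc isCompact_K hKne hgcont
  have hHint : IntervalIntegrable H MeasureTheory.volume 0 1 :=
    ContinuousOn.intervalIntegrable (by rw [Set.uIcc_of_le h01]; exact hHcont)
  have hGH : ∀ t ∈ Set.Icc (0:ℝ) 1, G t ≤ H t := by
    intro t ht
    have himg : IsCompact ((fun v => g (t, v)) '' K) :=
      isCompact_K.image_of_continuousOn <|
        hgcont.comp (Continuous.prodMk_right t).continuousOn fun v hv => ⟨ht, hv⟩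
    exact le_csSup himg.bddAbove ⟨v₀, hv₀K, rfl⟩
  have hmono : (∫ t in (0:ℝ)..1, G t) ≤ ∫ t in (0:ℝ)..1, H t :=
    intervalIntegral.integral_mono_on h01 hGint hHint hGH
  have hae : ∀ᵐ t ∂(MeasureTheory.volume), t ∈ Set.uIoc (0:ℝ) 1 →
      sSup {r : ℝ | ∃ v : Fin n → ℝ, v ≠ 0 ∧
        r = ((deriv γ t).mulVec v ⬝ᵥ v) / ((γ t).mulVec v ⬝ᵥ v)} = H t := by
    have h1ae : ∀ᵐ t : ℝ ∂(MeasureTheory.volume), t ≠ 1 := by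
      refine MeasureTheory.ae_iff.mpr ?_
      simpa using MeasureTheory.measure_singleton (1 : ℝ)
    filter_upwards [h1ae] with t ht1 htmem
    rw [Set.uIoc_of_le h01] at htmem
    have htIoo : t ∈ Set.Ioo (0:ℝ) 1 := ⟨htmem.1, lt_of_le_of_ne htmem.2 ht1⟩
    rw [hderiv_eq t htIoo,
      set_eq_image (B t) (γ t) (hpos t (Set.Ioo_subset_Icc_self htIoo))]
  have hint_eq : (∫ t in (0:ℝ)..1, sSup {r : ℝ | ∃ v : Fin n → ℝ, v ≠ 0 ∧
      r = ((deriv γ t).mulVec v ⬝ᵥ v) / ((γ t).mulVec v ⬝ᵥ v)}) = ∫ t in (0:ℝ)..1, H t :=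
    intervalIntegral.integral_congr_ae hae
  have key : Real.log (sSup (spectrum ℝ A)) ≤ ∫ t in (0:ℝ)..1, sSup {r : ℝ |
      ∃ v : Fin n → ℝ, v ≠ 0 ∧ r = ((deriv γ t).mulVec v ⬝ᵥ v) / ((γ t).mulVec v ⬝ᵥ v)} := by
    rw [hlam, hint_eq]
    calc Real.log (hA.eigenvalues i) = f 1 - f 0 := by rw [hf1, hf0]; ring
      _ = ∫ t in (0:ℝ)..1, G t := hFTC.symm
      _ ≤ ∫ t in (0:ℝ)..1, H t := hmono
  exact mul_le_mul_of_nonneg_left key (by norm_num)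
end

section
/- For every essential homotopy class of closed curves on a flat torus ℝⁿ/Λ and metrics coming from positive-definite forms, the supremum over homotopy classes α of ℓ_{X'}(α)/ℓ_X(α) equals the maximal stretch of the linear map between the tori: sup over nonzero lattice vectors v ∈ Λ of ‖v‖_{X'}/‖v‖_X = sup over nonzero vectors w ∈ ℝⁿ of ‖w‖_{X'}/‖w‖_X, where ‖v‖_X = √(vᵀXv). Hence the curve-ratio metric κ equals the Lipschitz metric d_Th. -/
open Matrix Filter Topology

private lemma quad_smul {n : ℕ} (X : Matrix (Fin n) (Fin n) ℝ) (c : ℝ) (w : Fin n → ℝ) :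
    (c • w) ⬝ᵥ X.mulVec (c • w) = (c * c) * (w ⬝ᵥ X.mulVec w) := by
  rw [Matrix.mulVec_smul, smul_dotProduct, dotProduct_smul, smul_eq_mul, smul_eq_mul]
  ring

private lemma quad_cont {n : ℕ} (X : Matrix (Fin n) (Fin n) ℝ) :
    Continuous fun w : Fin n → ℝ => w ⬝ᵥ X.mulVec w :=
  continuous_id.dotProduct (continuous_const.matrix_mulVec continuous_id)

private lemma quad_pos {n : ℕ} {X : Matrix (Fin n) (Fin n) ℝ} (hX : X.PosDef)
    {w : Fin n → ℝ} (hw : w ≠ 0) : 0 < w ⬝ᵥ X.mulVec w := by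
  have := hX.dotProduct_mulVec_pos hw
  rwa [star_trivial] at this

private lemma tendsto_round_div (c : ℝ) :
    Tendsto (fun N : ℕ => ((round (((N : ℝ) + 1) * c) : ℤ) : ℝ) / ((N : ℝ) + 1)) atTop (𝓝 c) := by
  have hpos : ∀ N : ℕ, (0 : ℝ) < (N : ℝ) + 1 := fun N => by positivity
  have heq : ∀ N : ℕ, ((round (((N : ℝ) + 1) * c) : ℤ) : ℝ) / ((N : ℝ) + 1)
      = c + (((round (((N : ℝ) + 1) * c) : ℤ) : ℝ) - ((N : ℝ) + 1) * c) / ((N : ℝ) + 1) := by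
    intro N
    field_simp
    ring
  have hz : Tendsto (fun N : ℕ =>
      (((round (((N : ℝ) + 1) * c) : ℤ) : ℝ) - ((N : ℝ) + 1) * c) / ((N : ℝ) + 1))
      atTop (𝓝 0) := by
    apply squeeze_zero_norm (a := fun N : ℕ => (1 / 2) / ((N : ℝ) + 1))
    · intro N
      rw [norm_div, Real.norm_eq_abs, Real.norm_eq_abs, abs_of_pos (hpos N)]
      apply div_le_div_of_nonneg_right ?_ (hpos N).le
      rw [abs_sub_comm]
      exact abs_sub_round _
    · have := tendsto_one_div_add_atTop_nhds_zero_nat (𝕜 := ℝ)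
      have h2 : Tendsto (fun N : ℕ => (1 / 2 : ℝ) * (1 / ((N : ℝ) + 1))) atTop (𝓝 ((1/2) * 0)) :=
        this.const_mul _
      simpa [div_eq_mul_inv, mul_comm] using h2
  simp only [heq]
  simpa using tendsto_const_nhds.add hz

private lemma g_smul {n : ℕ} (X X' : Matrix (Fin n) (Fin n) ℝ) {c : ℝ} (hc : c ≠ 0)
    (w : Fin n → ℝ) :
    Real.sqrt ((c • w) ⬝ᵥ X'.mulVec (c • w)) / Real.sqrt ((c • w) ⬝ᵥ X.mulVec (c • w))
      = Real.sqrt (w ⬝ᵥ X'.mulVec w) / Real.sqrt (w ⬝ᵥ X.mulVec w) := by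
  rw [quad_smul, quad_smul, Real.sqrt_mul (mul_self_nonneg c), Real.sqrt_mul (mul_self_nonneg c),
    Real.sqrt_mul_self_eq_abs]
  exact mul_div_mul_left _ _ (abs_ne_zero.2 hc)

private lemma g_contAt {n : ℕ} {X X' : Matrix (Fin n) (Fin n) ℝ} (hX : X.PosDef)
    {w : Fin n → ℝ} (hw : w ≠ 0) :
    ContinuousAt (fun w : Fin n → ℝ =>
      Real.sqrt (w ⬝ᵥ X'.mulVec w) / Real.sqrt (w ⬝ᵥ X.mulVec w)) w := by
  apply ContinuousAt.div
  · exact ((quad_cont X').sqrt).continuousAt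
  · exact ((quad_cont X).sqrt).continuousAt
  · exact Real.sqrt_ne_zero'.mpr (quad_pos hX hw)

/-- For a full-rank lattice `Λ ⊂ ℝⁿ` (spanned over `ℤ` by a basis `B` of `ℝⁿ`) and
positive-definite forms `X, X'`, the supremum of the length ratios
`‖v‖_{X'} / ‖v‖_X = √(vᵀX'v)/√(vᵀXv)` over nonzero lattice vectors `v ∈ Λ` (i.e. over
homotopy classes of essential closed curves on the torus) equals the supremum over all
nonzero vectors `w ∈ ℝⁿ`, the maximal stretch of the linear map between the tori.
Hence the curve-ratio metric `κ` equals the Lipschitz metric `d_Th`. -/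
theorem sup_lattice_stretch_eq_sup_stretch (n : ℕ)
    (X X' : Matrix (Fin n) (Fin n) ℝ) (hX : X.PosDef) (hX' : X'.PosDef)
    (B : Module.Basis (Fin n) ℝ (Fin n → ℝ)) :
    sSup {r : ℝ | ∃ v : Fin n → ℝ, v ≠ 0 ∧ (∃ m : Fin n → ℤ, v = ∑ i, (m i : ℝ) • B i) ∧
        r = Real.sqrt (v ⬝ᵥ X'.mulVec v) / Real.sqrt (v ⬝ᵥ X.mulVec v)}
      = sSup {r : ℝ | ∃ w : Fin n → ℝ, w ≠ 0 ∧
        r = Real.sqrt (w ⬝ᵥ X'.mulVec w) / Real.sqrt (w ⬝ᵥ X.mulVec w)} := by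
  classical
  set g : (Fin n → ℝ) → ℝ :=
    fun w => Real.sqrt (w ⬝ᵥ X'.mulVec w) / Real.sqrt (w ⬝ᵥ X.mulVec w) with hg
  set Slat : Set ℝ := {r : ℝ | ∃ v : Fin n → ℝ, v ≠ 0 ∧
      (∃ m : Fin n → ℤ, v = ∑ i, (m i : ℝ) • B i) ∧ r = g v} with hSlat
  set Sall : Set ℝ := {r : ℝ | ∃ w : Fin n → ℝ, w ≠ 0 ∧ r = g w} with hSall
  show sSup Slat = sSup Sall
  rcases Nat.eq_zero_or_pos n with hn | hn
  · subst hn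
    have h0 : ∀ v : Fin 0 → ℝ, v = 0 := fun v => funext fun i => i.elim0
    have e1 : Slat = ∅ := by
      ext r; simp only [hSlat, Set.mem_setOf_eq, Set.mem_empty_iff_false, iff_false]
      rintro ⟨v, hv, -⟩; exact hv (h0 v)
    have e2 : Sall = ∅ := by
      ext r; simp only [hSall, Set.mem_setOf_eq, Set.mem_empty_iff_false, iff_false]
      rintro ⟨v, hv, -⟩; exact hv (h0 v)
    rw [e1, e2]
  -- main case
  have hsub : Slat ⊆ Sall := by
    rintro r ⟨v, hv, -, hr⟩; exact ⟨v, hv, hr⟩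
  -- scale invariance of g
  have hginv : ∀ (c : ℝ), c ≠ 0 → ∀ w : Fin n → ℝ, g (c • w) = g w :=
    fun c hc w => g_smul X X' hc w
  -- Sall is the image of the unit sphere under g
  have himg : Sall = g '' (Metric.sphere (0 : Fin n → ℝ) 1) := by
    ext r
    constructor
    · rintro ⟨w, hw, rfl⟩
      refine ⟨‖w‖⁻¹ • w, ?_, ?_⟩
      · simp [norm_smul, norm_ne_zero_iff.mpr hw,
          inv_mul_cancel₀ (norm_ne_zero_iff.mpr hw)]
      · exact hginv _ (inv_ne_zero (norm_ne_zero_iff.mpr hw)) w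
    · rintro ⟨w, hw, rfl⟩
      have hw1 : ‖w‖ = 1 := by simpa using hw
      exact ⟨w, fun h => by simp [h] at hw1, rfl⟩
  have hcomp : IsCompact (g '' (Metric.sphere (0 : Fin n → ℝ) 1)) := by
    apply (isCompact_sphere (0 : Fin n → ℝ) 1).image_of_continuousOn
    intro w hw
    have hw1 : ‖w‖ = 1 := by simpa using hw
    exact (g_contAt hX (fun h => by simp [h] at hw1)).continuousWithinAt
  have bddAll : BddAbove Sall := by rw [himg]; exact hcomp.bddAbove
  have bddLat : BddAbove Slat := bddAll.mono hsub
  -- a nonzero lattice vector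
  have i0 : Fin n := ⟨0, hn⟩
  have hB0 : (B i0 : Fin n → ℝ) ≠ 0 := B.ne_zero i0
  have hB0mem : g (B i0) ∈ Slat := by
    refine ⟨B i0, hB0, ⟨fun i => if i = i0 then 1 else 0, ?_⟩, rfl⟩
    rw [Finset.sum_eq_single i0]
    · simp
    · intro b _ hb; simp [hb]
    · intro h; exact absurd (Finset.mem_univ i0) h
  have hlatne : Slat.Nonempty := ⟨_, hB0mem⟩
  apply le_antisymm
  · exact csSup_le_csSup bddAll hlatne hsub
  · apply csSup_le (hlatne.mono hsub)
    rintro r ⟨w, hw, rfl⟩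
    -- approximate w by rescaled lattice vectors
    set c : Fin n → ℝ := fun i => B.repr w i with hc
    set v : ℕ → (Fin n → ℝ) := fun N =>
      ∑ i, ((round (((N : ℝ) + 1) * c i) : ℤ) : ℝ) • B i with hv
    set u : ℕ → (Fin n → ℝ) := fun N => (((N : ℝ) + 1))⁻¹ • v N with hu
    have hNpos : ∀ N : ℕ, ((N : ℝ) + 1) ≠ 0 := fun N => by positivity
    have huval : ∀ N, u N = ∑ i,
        (((round (((N : ℝ) + 1) * c i) : ℤ) : ℝ) / ((N : ℝ) + 1)) • B i := by
      intro N
      simp only [hu, hv]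
      rw [Finset.smul_sum]
      refine Finset.sum_congr rfl fun i _ => ?_
      rw [smul_smul, div_eq_inv_mul]
    have hwrepr : ∑ i, c i • B i = w := B.sum_repr w
    have htu : Tendsto u atTop (𝓝 w) := by
      rw [← hwrepr, funext huval]
      exact tendsto_finset_sum _ fun i _ => (tendsto_round_div (c i)).smul_const (B i)
    have hgu : Tendsto (fun N => g (u N)) atTop (𝓝 (g w)) :=
      (g_contAt hX hw).tendsto.comp htu
    have hev : ∀ᶠ N in atTop, u N ≠ 0 := htu.eventually_ne hw
    have hle : ∀ᶠ N in atTop, g (u N) ≤ sSup Slat := by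
      filter_upwards [hev] with N hN
      have hvN : v N ≠ 0 := by
        intro h
        apply hN
        show (((N : ℝ) + 1))⁻¹ • v N = 0
        rw [h, smul_zero]
      have : g (u N) = g (v N) := hginv _ (inv_ne_zero (hNpos N)) (v N)
      rw [this]
      exact le_csSup bddLat ⟨v N, hvN, ⟨fun i => round (((N : ℝ) + 1) * c i), rfl⟩, rfl⟩
    exact le_of_tendsto hgu hle
end
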